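/- arXiv:2602.21060 — 2 statements merged into one kernel-verified Lean document; each statement's English description precedes it below -/
import Mathlib

section
/- Let f : R → S be a morphism of commutative rings such that the base change functor S ⊗_R (−) is faithful and exact. If f is both injective and an epimorphism in the category of commutative rings, then f is an isomorphism. -/
open TensorProduct

/-- If the base change functor `S ⊗_R (-)` is faithful and exact (i.e. `S` is flat
and tensoring reflects zero modules), and `f : R → S` is an injective epimorphism of
commutative rings, then `f` is an isomorphism. -/
theorem injective_epi_faithful_exact_baseChange_isIso
    (R S : Type) [CommRing R] [CommRing S] [Algebra R S]
    [Module.Flat R S]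
    (hfaithful : ∀ (M : Type) [AddCommGroup M] [Module R M],
      Subsingleton (S ⊗[R] M) → Subsingleton M)
    (hepi : CategoryTheory.Epi (CommRingCat.ofHom (algebraMap R S)))
    (hinj : Function.Injective (algebraMap R S)) :
    Function.Bijective (algebraMap R S) := by
  refine ⟨hinj, ?_⟩
  have hepi' := CommRingCat.epi_iff_tmul_eq_tmul.mp hepi
  set N := LinearMap.range (Algebra.linearMap R S) with hN
  have hone : (Submodule.Quotient.mk (1 : S) : S ⧸ N) = 0 := by
    rw [Submodule.Quotient.mk_eq_zero]
    exact ⟨1, by simp⟩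
  have key : ∀ (s t : S), s ⊗ₜ[R] (Submodule.Quotient.mk t : S ⧸ N) = 0 := by
    intro s t
    have h1 : s ⊗ₜ[R] t = (s * t) ⊗ₜ[R] (1 : S) := by
      calc s ⊗ₜ[R] t = s • ((1 : S) ⊗ₜ[R] t) := by
            rw [smul_tmul', smul_eq_mul, mul_one]
        _ = s • (t ⊗ₜ[R] (1 : S)) := by rw [(Algebra.isEpi_iff_forall_one_tmul_eq R S).mp hepi' t]
        _ = (s * t) ⊗ₜ[R] (1 : S) := by rw [smul_tmul', smul_eq_mul]
    have h2 := congrArg (LinearMap.lTensor S N.mkQ) h1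
    simpa [hone] using h2
  have hsub : Subsingleton (S ⊗[R] (S ⧸ N)) := by
    refine subsingleton_of_forall_eq 0 fun x => ?_
    induction x using TensorProduct.induction_on with
    | zero => rfl
    | tmul s q =>
      obtain ⟨t, rfl⟩ := Submodule.Quotient.mk_surjective N q
      exact key s t
    | add x y hx hy => rw [hx, hy, add_zero]
  have := hfaithful (S ⧸ N) hsub
  intro s
  have : (Submodule.Quotient.mk s : S ⧸ N) = 0 := Subsingleton.elim _ _
  obtain ⟨r, hr⟩ := (Submodule.Quotient.mk_eq_zero N).mp this
  exact ⟨r, hr⟩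
end

section
/- Let f : R → S be a morphism of commutative rings. If f is an epimorphism in the category of commutative rings and S is faithfully flat over R via f, then f is an isomorphism. -/
open TensorProduct

/-- A faithfully flat epimorphism of commutative rings is an isomorphism. -/
theorem faithfullyFlat_epi_isIso
    (R S : Type) [CommRing R] [CommRing S] [Algebra R S]
    [Module.FaithfullyFlat R S]
    (hepi : CategoryTheory.Epi (CommRingCat.ofHom (algebraMap R S))) :
    Function.Bijective (algebraMap R S) := by
  set φ : R →ₗ[R] S := Algebra.linearMap R S with hφ
  constructor
  · -- injectivity
    show Function.Injective φ
    rw [← LinearMap.ker_eq_bot (f := φ)]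
    set ι : LinearMap.ker φ →ₗ[R] R := (LinearMap.ker φ).subtype
    have hcomp : φ ∘ₗ ι = 0 := by
      ext x
      exact x.2
    have hinj : Function.Injective ((LinearMap.mul' R S) ∘ₗ (LinearMap.lTensor S φ)) := by
      have : (LinearMap.mul' R S) ∘ₗ (LinearMap.lTensor S φ)
          = (TensorProduct.rid R S).toLinearMap := by
        apply TensorProduct.ext'
        intro s r
        simp [hφ, Algebra.smul_def, mul_comm]
      rw [this]
      exact (TensorProduct.rid R S).injective
    have h0 : LinearMap.lTensor S ι = 0 := by
      have : ((LinearMap.mul' R S) ∘ₗ (LinearMap.lTensor S φ)) ∘ₗ LinearMap.lTensor S ι = 0 := by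
        rw [LinearMap.comp_assoc, ← LinearMap.lTensor_comp, hcomp, LinearMap.lTensor_zero,
          LinearMap.comp_zero]
      apply TensorProduct.ext'
      intro s x
      apply hinj
      simpa using congr($this (s ⊗ₜ[R] x))
    have hι : ι = 0 := (Module.FaithfullyFlat.zero_iff_lTensor_zero R S ι).mpr h0
    rw [eq_bot_iff]
    intro x hx
    simpa [ι] using congr($hι ⟨x, hx⟩)
  · -- surjectivity
    have htmul := (CommRingCat.epi_iff_tmul_eq_tmul (R := R) (S := S)).mp hepi
    set π : S →ₗ[R] (S ⧸ LinearMap.range φ) := (LinearMap.range φ).mkQ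
    have h0 : LinearMap.lTensor S π = 0 := by
      apply TensorProduct.ext'
      intro s t
      have h1 : s ⊗ₜ[R] t = (s * t) ⊗ₜ[R] (1 : S) := by
        calc s ⊗ₜ[R] t = (s ⊗ₜ[R] (1:S)) * ((1:S) ⊗ₜ[R] t) := by
              rw [Algebra.TensorProduct.tmul_mul_tmul, mul_one, one_mul]
          _ = (s ⊗ₜ[R] (1:S)) * (t ⊗ₜ[R] (1:S)) := by rw [(Algebra.isEpi_iff_forall_one_tmul_eq R S).mp htmul t]
          _ = (s * t) ⊗ₜ[R] (1:S) := by rw [Algebra.TensorProduct.tmul_mul_tmul, mul_one]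
      have hπ1 : π (1 : S) = 0 := by
        rw [Submodule.mkQ_apply, Submodule.Quotient.mk_eq_zero]
        exact ⟨1, by simp [hφ]⟩
      rw [h1, LinearMap.lTensor_tmul, hπ1, tmul_zero, LinearMap.zero_apply]
    have hπ : π = 0 := (Module.FaithfullyFlat.zero_iff_lTensor_zero R S π).mpr h0
    intro s
    have : π s = 0 := by rw [hπ]; rfl
    rw [Submodule.mkQ_apply, Submodule.Quotient.mk_eq_zero] at this
    obtain ⟨r, hr⟩ := this
    exact ⟨r, hr⟩
end
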